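/- For positive reals x₁,…,xₙ, not all equal, the second derivative of the Lehmer mean L(p) = (Σᵢ xᵢ^p)/(Σᵢ xᵢ^(p-1)) has at most n(n+4)(n−1)/6 − 1 real zeros; in particular L has at most n(n+4)(n−1)/6 − 1 inflection points. -/

import Mathlib

open Real Finset

lemma rolle_count (f : ℝ → ℝ) (hf : Differentiable ℝ f) :
    ∀ N : ℕ, ∀ s : Finset ℝ, s.card = N → (∀ x ∈ s, f x = 0) →
      ∃ t : Finset ℝ, (∀ x ∈ t, deriv f x = 0) ∧ (∀ x ∈ t, ∃ y ∈ s, x < y) ∧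
        s.card ≤ t.card + 1 := by
  intro N
  induction N with
  | zero =>
    intro s hs _
    exact ⟨∅, by simp, by simp, by omega⟩
  | succ N ih =>
    intro s hcard hzero
    rcases Nat.eq_zero_or_pos N with hN | hN
    · exact ⟨∅, by simp, by simp, by omega⟩
    have hne : s.Nonempty := by
      rw [← Finset.card_pos]; omega
    set a := s.max' hne with ha
    have hamem : a ∈ s := s.max'_mem hne
    have hcard' : (s.erase a).card = N := by
      simp [Finset.card_erase_of_mem hamem, hcard]
    have hne' : (s.erase a).Nonempty := by
      rw [← Finset.card_pos]; omega
    set b := (s.erase a).max' hne' with hb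
    have hbmem : b ∈ s.erase a := (s.erase a).max'_mem hne'
    have hbs : b ∈ s := Finset.mem_of_mem_erase hbmem
    have hba : b < a := by
      have h1 : b ≤ a := s.le_max' b hbs
      have h2 : b ≠ a := Finset.ne_of_mem_erase hbmem
      exact lt_of_le_of_ne h1 h2
    obtain ⟨c, hc, hc0⟩ := exists_deriv_eq_zero hba (hf.continuous.continuousOn)
      (by rw [hzero b hbs, hzero a hamem])
    obtain ⟨t', ht'0, ht'lt, ht'card⟩ := ih (s.erase a) hcard'
      (fun y hy => hzero y (Finset.mem_of_mem_erase hy))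
    have hcnot : c ∉ t' := by
      intro hmem
      obtain ⟨y, hy, hxy⟩ := ht'lt c hmem
      have : y ≤ b := (s.erase a).le_max' y hy
      have : c < b := lt_of_lt_of_le hxy this
      exact absurd hc.1 (not_lt.mpr this.le)
    refine ⟨insert c t', ?_, ?_, ?_⟩
    · intro z hz
      rcases Finset.mem_insert.mp hz with rfl | hz
      · exact hc0
      · exact ht'0 z hz
    · intro z hz
      rcases Finset.mem_insert.mp hz with rfl | hz
      · exact ⟨a, hamem, hc.2⟩
      · obtain ⟨y, hy, hxy⟩ := ht'lt z hz
        exact ⟨y, Finset.mem_of_mem_erase hy, hxy⟩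
    · rw [Finset.card_insert_of_notMem hcnot]
      omega

lemma finite_of_finsets (S : Set ℝ) (k : ℕ)
    (h : ∀ s : Finset ℝ, ↑s ⊆ S → s.card ≤ k) : S.Finite ∧ S.ncard ≤ k := by
  have hfin : S.Finite := by
    by_contra hinf
    obtain ⟨t, hts, htfin, htcard⟩ :=
      Set.Infinite.exists_subset_ncard_eq hinf (k + 1)
    have := h htfin.toFinset (by simpa using hts)
    rw [← Set.ncard_coe_finset, htfin.coe_toFinset, htcard] at this
    omega
  refine ⟨hfin, ?_⟩
  have := h hfin.toFinset (by simp)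
  rwa [← Set.ncard_coe_finset, hfin.coe_toFinset] at this

lemma expsum_zero_bound : ∀ (k : ℕ) (E : Finset ℝ) (c : ℝ → ℝ), E.card = k →
    (∃ e ∈ E, c e ≠ 0) →
    {p : ℝ | ∑ e ∈ E, c e * Real.exp (e * p) = 0}.Finite ∧
    {p : ℝ | ∑ e ∈ E, c e * Real.exp (e * p) = 0}.ncard ≤ k - 1 := by
  intro k
  induction k with
  | zero =>
    intro E c hcard ⟨e₀, he₀, _⟩
    rw [Finset.card_eq_zero] at hcard
    subst hcard; simp at he₀
  | succ k ih =>
    intro E c hcard ⟨e₀, he₀, hc₀⟩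
    by_cases hall : ∀ e ∈ E.erase e₀, c e = 0
    · -- single term, no zeros
      have hz : {p : ℝ | ∑ e ∈ E, c e * Real.exp (e * p) = 0} = ∅ := by
        ext p
        simp only [Set.mem_setOf_eq, Set.mem_empty_iff_false, iff_false]
        rw [Finset.sum_eq_single_of_mem e₀ he₀
          (fun e he hne => by rw [hall e (Finset.mem_erase.mpr ⟨hne, he⟩), zero_mul])]
        exact mul_ne_zero hc₀ (Real.exp_ne_zero _)
      rw [hz]
      exact ⟨Set.finite_empty, by simp⟩
    · push_neg at hall
      obtain ⟨e₁, he₁, hc₁⟩ := hall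
      -- shifted function g and its derivative g'
      set g : ℝ → ℝ := fun p => ∑ e ∈ E, c e * Real.exp ((e - e₀) * p) with hg
      set E' : Finset ℝ := (E.erase e₀).image (fun e => e - e₀) with hE'
      set c' : ℝ → ℝ := fun d => c (d + e₀) * d with hc'
      have hinj : Set.InjOn (fun e => e - e₀) (E.erase e₀) := fun a _ b _ h => by
        simpa using h
      have hE'card : E'.card = k := by
        rw [hE', Finset.card_image_of_injOn hinj, Finset.card_erase_of_mem he₀, hcard]
        omega
      have hgderiv : ∀ p : ℝ, HasDerivAt g (∑ d ∈ E', c' d * Real.exp (d * p)) p := by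
        intro p
        have h1 : HasDerivAt g (∑ e ∈ E, c e * ((e - e₀) * Real.exp ((e - e₀) * p))) p := by
          apply HasDerivAt.fun_sum
          intro e _
          have : HasDerivAt (fun q : ℝ => Real.exp ((e - e₀) * q))
              ((e - e₀) * Real.exp ((e - e₀) * p)) p := by
            simpa [mul_comm] using (((hasDerivAt_id p).const_mul (e - e₀)).exp)
          exact this.const_mul (c e)
        convert h1 using 1
        rw [hE', Finset.sum_image hinj,
          ← Finset.sum_erase (f := fun e => c e * ((e - e₀) * Real.exp ((e - e₀) * p)))
            E (a := e₀) (by simp)]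
        apply Finset.sum_congr rfl
        intro e _
        have he : e - e₀ + e₀ = e := by ring
        rw [hc']
        simp only [he]
        ring
      have hgdiff : Differentiable ℝ g := fun p => (hgderiv p).differentiableAt
      have hderivg : deriv g = fun p => ∑ d ∈ E', c' d * Real.exp (d * p) :=
        funext fun p => (hgderiv p).deriv
      -- zero sets agree
      have hsets : {p : ℝ | ∑ e ∈ E, c e * Real.exp (e * p) = 0} = {p : ℝ | g p = 0} := by
        ext p
        simp only [Set.mem_setOf_eq, hg]
        have : ∑ e ∈ E, c e * Real.exp (e * p)
            = Real.exp (e₀ * p) * ∑ e ∈ E, c e * Real.exp ((e - e₀) * p) := by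
          rw [Finset.mul_sum]
          apply Finset.sum_congr rfl
          intro e _
          rw [show (e : ℝ) * p = (e - e₀) * p + e₀ * p by ring, Real.exp_add]; ring
        rw [this, mul_eq_zero]
        simp [Real.exp_ne_zero]
      -- zeros of deriv g bounded by IH
      have hih := ih E' c' hE'card ⟨e₁ - e₀, Finset.mem_image_of_mem _ he₁,
        by simp [hc', sub_ne_zero.mpr (Finset.ne_of_mem_erase he₁), hc₁]⟩
      -- every finset of zeros of g has card ≤ k
      have hbound : ∀ s : Finset ℝ, ↑s ⊆ {p : ℝ | g p = 0} → s.card ≤ k := by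
        intro s hs
        obtain ⟨t, ht0, -, htcard⟩ := rolle_count g hgdiff s.card s rfl
          (fun y hy => hs (Finset.mem_coe.mpr hy))
        have htsub : ↑t ⊆ {p : ℝ | ∑ d ∈ E', c' d * Real.exp (d * p) = 0} := by
          intro z hz
          have := ht0 z (Finset.mem_coe.mp hz)
          rwa [hderivg] at this
        have : t.card ≤ k - 1 := by
          calc t.card = (↑t : Set ℝ).ncard := (Set.ncard_coe_finset t).symm
          _ ≤ _ := Set.ncard_le_ncard htsub hih.1
          _ ≤ k - 1 := hih.2
        rcases Nat.eq_zero_or_pos k with rfl | hk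
        · exfalso
          have hmem : e₁ - e₀ ∈ E' := Finset.mem_image_of_mem _ he₁
          have hE0 : E' = ∅ := Finset.card_eq_zero.mp hE'card
          rw [hE0] at hmem
          simp at hmem
        · omega
      rw [hsets]
      have := finite_of_finsets _ k hbound
      exact ⟨this.1, by omega⟩

lemma group_expsum {ι : Type*} [Fintype ι] (a γ : ι → ℝ) (p : ℝ) :
    ∑ m, γ m * Real.exp (a m * p) =
    ∑ e ∈ (Finset.univ.image a).filter
        (fun e => (∑ m ∈ Finset.univ.filter (fun m => a m = e), γ m) ≠ 0),
      (∑ m ∈ Finset.univ.filter (fun m => a m = e), γ m) * Real.exp (e * p) := by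
  rw [← Finset.sum_fiberwise_of_maps_to
    (g := a) (t := Finset.univ.image a)
    (fun m _ => Finset.mem_image_of_mem a (Finset.mem_univ m))
    (fun m => γ m * Real.exp (a m * p))]
  rw [Finset.sum_filter_of_ne
    (fun e _ h => by
      intro hC
      apply h
      rw [hC, zero_mul])]
  apply Finset.sum_congr rfl
  intro e _
  rw [Finset.sum_mul]
  apply Finset.sum_congr rfl
  intro m hm
  rw [(Finset.mem_filter.mp hm).2]

section LehmerAux

variable {n : ℕ}

private noncomputable def AA (L : Fin n → ℝ) : ℝ → ℝ := fun p => ∑ i, Real.exp (L i * p)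
private noncomputable def A1 (L : Fin n → ℝ) : ℝ → ℝ := fun p => ∑ i, L i * Real.exp (L i * p)
private noncomputable def A2 (L : Fin n → ℝ) : ℝ → ℝ := fun p => ∑ i, L i * (L i * Real.exp (L i * p))
private noncomputable def BB (L u : Fin n → ℝ) : ℝ → ℝ := fun p => ∑ i, u i * Real.exp (L i * p)
private noncomputable def B1 (L u : Fin n → ℝ) : ℝ → ℝ := fun p => ∑ i, u i * (L i * Real.exp (L i * p))
private noncomputable def B2 (L u : Fin n → ℝ) : ℝ → ℝ :=
  fun p => ∑ i, u i * (L i * (L i * Real.exp (L i * p)))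

private noncomputable def NN (L u : Fin n → ℝ) : ℝ → ℝ := fun p =>
  A2 L p * (BB L u p * BB L u p) + 2 * (AA L p * (B1 L u p * B1 L u p))
    - AA L p * (B2 L u p * BB L u p) - 2 * (A1 L p * (B1 L u p * BB L u p))

private def aexp (L : Fin n → ℝ) : Fin n × Fin n × Fin n → ℝ :=
  fun m => L m.1 + L m.2.1 + L m.2.2

private def gam (L u : Fin n → ℝ) : Fin n × Fin n × Fin n → ℝ := fun m =>
  (L m.1 * L m.1 + 2 * L m.2.1 * L m.2.2 - L m.2.1 * L m.2.1 - 2 * L m.1 * L m.2.1)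
    * (u m.2.1 * u m.2.2)

private lemma hexp (c p : ℝ) :
    HasDerivAt (fun q : ℝ => Real.exp (c * q)) (c * Real.exp (c * p)) p := by
  simpa [mul_comm] using ((hasDerivAt_id p).const_mul c).exp

private lemma hasDerivAt_AA (L : Fin n → ℝ) (p : ℝ) : HasDerivAt (AA L) (A1 L p) p :=
  HasDerivAt.fun_sum fun i _ => hexp (L i) p

private lemma hasDerivAt_A1 (L : Fin n → ℝ) (p : ℝ) : HasDerivAt (A1 L) (A2 L p) p :=
  HasDerivAt.fun_sum fun i _ => (hexp (L i) p).const_mul (L i)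

private lemma hasDerivAt_BB (L u : Fin n → ℝ) (p : ℝ) :
    HasDerivAt (BB L u) (B1 L u p) p :=
  HasDerivAt.fun_sum fun i _ => (hexp (L i) p).const_mul (u i)

private lemma hasDerivAt_B1 (L u : Fin n → ℝ) (p : ℝ) :
    HasDerivAt (B1 L u) (B2 L u p) p :=
  HasDerivAt.fun_sum fun i _ => ((hexp (L i) p).const_mul (L i)).const_mul (u i)

private lemma triple_key (L : Fin n → ℝ) (f g h : Fin n → ℝ) (p : ℝ) :
    (∑ i, f i * Real.exp (L i * p)) *
      ((∑ j, g j * Real.exp (L j * p)) * (∑ k, h k * Real.exp (L k * p)))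
    = ∑ m : Fin n × Fin n × Fin n,
        (f m.1 * (g m.2.1 * h m.2.2)) * Real.exp (aexp L m * p) := by
  rw [Finset.sum_mul_sum, Finset.sum_mul_sum]
  simp only [aexp, Fintype.sum_prod_type, Finset.mul_sum]
  apply Finset.sum_congr rfl; intro i _
  apply Finset.sum_congr rfl; intro j _
  apply Finset.sum_congr rfl; intro k _
  rw [show (L i + L j + L k) * p = L i * p + (L j * p + L k * p) by ring,
    Real.exp_add, Real.exp_add]
  ring

private lemma NN_expand (L u : Fin n → ℝ) (p : ℝ) :
    NN L u p = ∑ m : Fin n × Fin n × Fin n, gam L u m * Real.exp (aexp L m * p) := by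
  have eA : AA L p = ∑ i, (1 : ℝ) * Real.exp (L i * p) := by
    simp [AA]
  have eA1 : A1 L p = ∑ i, L i * Real.exp (L i * p) := rfl
  have eA2 : A2 L p = ∑ i, (L i * L i) * Real.exp (L i * p) := by
    apply Finset.sum_congr rfl; intros; ring
  have eB : BB L u p = ∑ i, u i * Real.exp (L i * p) := rfl
  have eB1 : B1 L u p = ∑ i, (u i * L i) * Real.exp (L i * p) := by
    apply Finset.sum_congr rfl; intros; ring
  have eB2 : B2 L u p = ∑ i, (u i * (L i * L i)) * Real.exp (L i * p) := by
    apply Finset.sum_congr rfl; intros; ring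
  rw [NN, eA, eA1, eA2, eB, eB1, eB2, triple_key, triple_key, triple_key, triple_key,
    Finset.mul_sum, Finset.mul_sum, ← Finset.sum_add_distrib, ← Finset.sum_sub_distrib,
    ← Finset.sum_sub_distrib]
  apply Finset.sum_congr rfl
  intro m _
  simp only [gam]
  ring

end LehmerAux

section LehmerAux2

variable {n : ℕ}

private lemma BB_pos (L u : Fin n → ℝ) (hu : ∀ i, 0 < u i) (hn : 0 < n) (p : ℝ) :
    0 < BB L u p :=
  Finset.sum_pos (fun i _ => mul_pos (hu i) (Real.exp_pos _))
    ⟨⟨0, hn⟩, Finset.mem_univ _⟩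

private lemma derivF (L u : Fin n → ℝ) (hu : ∀ i, 0 < u i) (hn : 0 < n) :
    deriv (fun q => AA L q / BB L u q) =
      fun p => (A1 L p * BB L u p - AA L p * B1 L u p) / (BB L u p)^2 :=
  funext fun p =>
    ((hasDerivAt_AA L p).div (hasDerivAt_BB L u p) (BB_pos L u hu hn p).ne').deriv

private lemma hasDerivAt_derivF (L u : Fin n → ℝ) (hu : ∀ i, 0 < u i) (hn : 0 < n)
    (p : ℝ) :
    HasDerivAt (fun q => (A1 L q * BB L u q - AA L q * B1 L u q) / (BB L u q)^2)
      (NN L u p / (BB L u p)^3) p := by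
  have hnum : HasDerivAt (fun q => A1 L q * BB L u q - AA L q * B1 L u q)
      ((A2 L p * BB L u p + A1 L p * B1 L u p)
        - (A1 L p * B1 L u p + AA L p * B2 L u p)) p :=
    ((hasDerivAt_A1 L p).mul (hasDerivAt_BB L u p)).sub
      ((hasDerivAt_AA L p).mul (hasDerivAt_B1 L u p))
  have hden := (hasDerivAt_BB L u p).fun_pow 2
  have h := hnum.fun_div hden (pow_ne_zero 2 (BB_pos L u hu hn p).ne')
  refine h.congr_deriv ?_
  have hB := (BB_pos L u hu hn p).ne'
  simp only [NN]
  field_simp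
  ring

private lemma iter2 (L u : Fin n → ℝ) (hu : ∀ i, 0 < u i) (hn : 0 < n) (p : ℝ) :
    iteratedDeriv 2 (fun q => AA L q / BB L u q) p = NN L u p / (BB L u p)^3 := by
  rw [iteratedDeriv_succ, iteratedDeriv_one, derivF L u hu hn]
  exact (hasDerivAt_derivF L u hu hn p).deriv

end LehmerAux2

theorem lehmer_inflection_bound (n : ℕ) (x : Fin n → ℝ) (hx : ∀ i, 0 < x i)
    (hne : ¬ ∀ i j, x i = x j) :
    {p : ℝ | iteratedDeriv 2
        (fun q : ℝ => (∑ i, x i ^ q) / (∑ i, x i ^ (q - 1))) p = 0}.Finite ∧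
      {p : ℝ | iteratedDeriv 2
        (fun q : ℝ => (∑ i, x i ^ q) / (∑ i, x i ^ (q - 1))) p = 0}.ncard ≤
        n * (n + 4) * (n - 1) / 6 - 1 := by
  classical
  have hne' := hne
  push_neg at hne'
  obtain ⟨i₀, j₀, hxij⟩ := hne'
  have hn2 : 2 ≤ n := by
    have h1 : (i₀ : ℕ) ≠ (j₀ : ℕ) := fun h => hxij (congrArg x (Fin.ext h))
    have := i₀.isLt
    have := j₀.isLt
    omega
  have hn : 0 < n := by omega
  set L : Fin n → ℝ := fun i => Real.log (x i) with hL
  set u : Fin n → ℝ := fun i => Real.exp (-L i) with hu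
  have hupos : ∀ i, 0 < u i := fun i => Real.exp_pos _
  have hxL : ∀ i, x i = Real.exp (L i) := fun i => (Real.exp_log (hx i)).symm
  have hFeq : (fun q : ℝ => (∑ i, x i ^ q) / (∑ i, x i ^ (q - 1)))
      = fun q => AA L q / BB L u q := by
    funext q
    simp only [AA, BB]
    congr 1
    · apply Finset.sum_congr rfl; intro i _
      rw [Real.rpow_def_of_pos (hx i)]
    · apply Finset.sum_congr rfl; intro i _
      rw [Real.rpow_def_of_pos (hx i)]
      show Real.exp (Real.log (x i) * (q - 1)) = Real.exp (-L i) * Real.exp (L i * q)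
      rw [← Real.exp_add]
      congr 1
      simp only [hL]
      ring
  rw [hFeq]
  have hBpos : ∀ p, 0 < BB L u p := BB_pos L u hupos hn
  have hIter : ∀ p, iteratedDeriv 2 (fun q => AA L q / BB L u q) p
      = NN L u p / (BB L u p)^3 := iter2 L u hupos hn
  set C : ℝ → ℝ := fun e =>
    ∑ m ∈ Finset.univ.filter (fun m => aexp L m = e), gam L u m with hC
  set E₀ : Finset ℝ := (Finset.univ.image (aexp L)).filter (fun e => C e ≠ 0) with hE₀
  have hgroup : ∀ p, NN L u p = ∑ e ∈ E₀, C e * Real.exp (e * p) := by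
    intro p
    rw [NN_expand]
    exact group_expsum (aexp L) (gam L u) p
  -- some grouped coefficient is nonzero
  have hex : ∃ e ∈ E₀, C e ≠ 0 := by
    by_contra hcon
    push_neg at hcon
    have hE0 : E₀ = ∅ := by
      apply Finset.eq_empty_iff_forall_notMem.mpr
      intro e he
      have h1 := hcon e he
      rw [hE₀, Finset.mem_filter] at he
      exact he.2 h1
    have hNzero : ∀ p, NN L u p = 0 := fun p => by rw [hgroup p, hE0, Finset.sum_empty]
    have hdd : ∀ p, deriv (deriv (fun q => AA L q / BB L u q)) p = 0 := by
      intro p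
      have h2 := hIter p
      rw [iteratedDeriv_succ, iteratedDeriv_one] at h2
      rw [h2, hNzero p, zero_div]
    have hdiff : Differentiable ℝ (deriv (fun q => AA L q / BB L u q)) := by
      rw [derivF L u hupos hn]
      exact fun p => (hasDerivAt_derivF L u hupos hn p).differentiableAt
    set cc := deriv (fun q => AA L q / BB L u q) 0 with hcc
    have hconstd : ∀ p, deriv (fun q => AA L q / BB L u q) p = cc :=
      fun p => is_const_of_deriv_eq_zero hdiff hdd p 0
    have hFd : ∀ p, HasDerivAt (fun q => AA L q / BB L u q) cc p := by
      intro p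
      have h1 := (hasDerivAt_AA L p).fun_div (hasDerivAt_BB L u p) (hBpos p).ne'
      have h2 := h1.deriv
      rw [hconstd p] at h2
      rwa [← h2] at h1
    have haff : ∀ p, AA L p / BB L u p = AA L 0 / BB L u 0 + cc * p := by
      intro p
      have hG : ∀ q : ℝ, HasDerivAt (fun r => AA L r / BB L u r - cc * r) 0 q := by
        intro q
        have h3 := (hFd q).fun_sub ((hasDerivAt_id q).const_mul cc)
        simpa using h3
      have hGdiff : Differentiable ℝ (fun r => AA L r / BB L u r - cc * r) :=
        fun q => (hG q).differentiableAt
      have h3 := is_const_of_deriv_eq_zero hGdiff (fun q => (hG q).deriv) p 0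
      simp only [mul_zero, sub_zero] at h3
      linarith
    have hSne : (Finset.univ.image x).Nonempty :=
      ⟨x i₀, Finset.mem_image_of_mem x (Finset.mem_univ i₀)⟩
    set Mx := (Finset.univ.image x).max' hSne with hMxd
    set mx := (Finset.univ.image x).min' hSne with hmxd
    have hxle : ∀ i, x i ≤ Mx := fun i =>
      Finset.le_max' _ _ (Finset.mem_image_of_mem x (Finset.mem_univ i))
    have hxge : ∀ i, mx ≤ x i := fun i =>
      Finset.min'_le _ _ (Finset.mem_image_of_mem x (Finset.mem_univ i))
    have hArep : ∀ p, AA L p = ∑ i, x i * (u i * Real.exp (L i * p)) := by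
      intro p
      apply Finset.sum_congr rfl
      intro i _
      rw [hxL i]
      simp only [hu]
      rw [← Real.exp_add, ← Real.exp_add]
      congr 1
      ring
    have hub : ∀ p, AA L p / BB L u p ≤ Mx := by
      intro p
      rw [div_le_iff₀ (hBpos p)]
      calc AA L p = ∑ i, x i * (u i * Real.exp (L i * p)) := hArep p
        _ ≤ ∑ i, Mx * (u i * Real.exp (L i * p)) :=
          Finset.sum_le_sum fun i _ => mul_le_mul_of_nonneg_right (hxle i)
            (le_of_lt (mul_pos (hupos i) (Real.exp_pos _)))
        _ = Mx * BB L u p := by rw [← Finset.mul_sum]; rfl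
    have hlb : ∀ p, mx ≤ AA L p / BB L u p := by
      intro p
      rw [le_div_iff₀ (hBpos p)]
      calc mx * BB L u p = ∑ i, mx * (u i * Real.exp (L i * p)) := by
            rw [← Finset.mul_sum]; rfl
        _ ≤ ∑ i, x i * (u i * Real.exp (L i * p)) :=
          Finset.sum_le_sum fun i _ => mul_le_mul_of_nonneg_right (hxge i)
            (le_of_lt (mul_pos (hupos i) (Real.exp_pos _)))
        _ = AA L p := (hArep p).symm
    have hcc0 : cc = 0 := by
      by_contra hc0
      rcases lt_or_gt_of_ne hc0 with hcneg | hcpos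
      · have h4 := haff ((mx - 1 - AA L 0 / BB L u 0) / cc)
        rw [mul_div_cancel₀ _ hc0] at h4
        have h5 := hlb ((mx - 1 - AA L 0 / BB L u 0) / cc)
        rw [h4] at h5
        linarith
      · have h4 := haff ((Mx + 1 - AA L 0 / BB L u 0) / cc)
        rw [mul_div_cancel₀ _ hc0] at h4
        have h5 := hub ((Mx + 1 - AA L 0 / BB L u 0) / cc)
        rw [h4] at h5
        linarith
    set v := AA L 0 / BB L u 0 with hv
    have hFc : ∀ p, AA L p = v * BB L u p := by
      intro p
      have h4 := haff p
      rw [hcc0, zero_mul, add_zero] at h4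
      rw [← h4]
      exact (div_mul_cancel₀ _ (hBpos p).ne').symm
    have hzero2 : ∀ p, ∑ i, (1 - v * u i) * Real.exp (L i * p) = 0 := by
      intro p
      have h4 : ∑ i, (1 - v * u i) * Real.exp (L i * p)
          = AA L p - v * BB L u p := by
        simp only [AA, BB, Finset.mul_sum, ← Finset.sum_sub_distrib]
        apply Finset.sum_congr rfl
        intros
        ring
      rw [h4, hFc p, sub_self]
    have hxall : ∀ i, x i = v := by
      intro i
      by_contra hxi
      have hC2 : (∑ j ∈ Finset.univ.filter (fun j => L j = L i), (1 - v * u j))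
          = ((Finset.univ.filter (fun j => L j = L i)).card : ℝ) * (1 - v * u i) := by
        rw [Finset.sum_congr rfl (fun j hj => ?_), Finset.sum_const, nsmul_eq_mul]
        have hj2 := (Finset.mem_filter.mp hj).2
        simp only [hu, hj2]
      have hcardpos : 0 < (Finset.univ.filter (fun j => L j = L i)).card :=
        Finset.card_pos.mpr ⟨i, Finset.mem_filter.mpr ⟨Finset.mem_univ i, rfl⟩⟩
      have hterm : (1 : ℝ) - v * u i ≠ 0 := by
        intro h0
        apply hxi
        have h5 : v * u i = 1 := by linarith
        rw [hxL i]
        have h6 : u i = (Real.exp (L i))⁻¹ := by simp only [hu]; rw [Real.exp_neg]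
        rw [h6] at h5
        exact ((mul_inv_eq_one₀ (Real.exp_ne_zero _)).mp h5).symm
      have hCne : (∑ j ∈ Finset.univ.filter (fun j => L j = L i), (1 - v * u j)) ≠ 0 := by
        rw [hC2]
        exact mul_ne_zero (Nat.cast_ne_zero.mpr (by omega)) hterm
      obtain ⟨hfin2, -⟩ := expsum_zero_bound _
        ((Finset.univ.image L).filter
          (fun e => (∑ j ∈ Finset.univ.filter (fun j => L j = e), (1 - v * u j)) ≠ 0))
        (fun e => ∑ j ∈ Finset.univ.filter (fun j => L j = e), (1 - v * u j)) rfl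
        ⟨L i, Finset.mem_filter.mpr
          ⟨Finset.mem_image_of_mem L (Finset.mem_univ i), hCne⟩, hCne⟩
      have huniv : {p : ℝ |
          ∑ e ∈ (Finset.univ.image L).filter
            (fun e => (∑ j ∈ Finset.univ.filter (fun j => L j = e), (1 - v * u j)) ≠ 0),
            (∑ j ∈ Finset.univ.filter (fun j => L j = e), (1 - v * u j))
              * Real.exp (e * p) = 0} = Set.univ := by
        ext p
        simp only [Set.mem_setOf_eq, Set.mem_univ, iff_true]
        rw [← group_expsum L (fun j => 1 - v * u j) p]
        exact hzero2 p
      rw [huniv] at hfin2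
      exact Set.infinite_univ hfin2
    exact hne fun i j => by rw [hxall i, hxall j]
  -- main application of the zero-counting bound
  obtain ⟨hfin, hcard⟩ := expsum_zero_bound E₀.card E₀ C rfl hex
  have hset : {p : ℝ | iteratedDeriv 2 (fun q => AA L q / BB L u q) p = 0}
      = {p : ℝ | ∑ e ∈ E₀, C e * Real.exp (e * p) = 0} := by
    ext p
    simp only [Set.mem_setOf_eq]
    rw [hIter p, div_eq_zero_iff]
    constructor
    · rintro (h | h)
      · rw [← hgroup p]; exact h
      · exact absurd h (pow_ne_zero 3 (hBpos p).ne')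
    · intro h
      left
      rw [hgroup p]
      exact h
  rw [hset]
  -- counting distinct exponents
  set Tf : Finset (Sym (Fin n) 3) := Finset.univ.filter (fun m : Sym (Fin n) 3 =>
      ∃ i ∈ (m : Multiset (Fin n)), ∃ j ∈ (m : Multiset (Fin n)), L i ≠ L j) with hTf
  have hsub : E₀ ⊆ Finset.image
      (fun m : Sym (Fin n) 3 => ((m : Multiset (Fin n)).map L).sum) Tf := by
    intro e he
    rw [hE₀, Finset.mem_filter] at he
    obtain ⟨m, hm, hγm⟩ := Finset.exists_ne_zero_of_sum_ne_zero he.2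
    have ham : aexp L m = e := (Finset.mem_filter.mp hm).2
    obtain ⟨i, j, k⟩ := m
    have hnotall : ¬ (L i = L j ∧ L j = L k) := by
      rintro ⟨h1, h2⟩
      apply hγm
      simp only [gam]
      rw [h1, h2]
      ring
    refine Finset.mem_image.mpr ⟨⟨{i, j, k}, by rfl⟩,
      Finset.mem_filter.mpr ⟨Finset.mem_univ _, ?_⟩, ?_⟩
    · by_cases hij : L i = L j
      · exact ⟨j, by simp, k, by simp, fun h => hnotall ⟨hij, h⟩⟩
      · exact ⟨i, by simp, j, by simp, hij⟩
    · rw [← ham]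
      show ((({i, j, k} : Multiset (Fin n))).map L).sum = aexp L (i, j, k)
      simp [aexp]
      ring
  have hE0le1 : E₀.card ≤ Tf.card :=
    (Finset.card_le_card hsub).trans Finset.card_image_le
  have hdisj : Disjoint Tf (Finset.univ.image (fun i : Fin n => Sym.replicate 3 i)) := by
    rw [Finset.disjoint_left]
    intro m hmf hmr
    obtain ⟨i0, -, rfl⟩ := Finset.mem_image.mp hmr
    obtain ⟨i, hi, j, hj, hij⟩ := (Finset.mem_filter.mp hmf).2
    rw [Sym.coe_replicate] at hi hj
    rw [Multiset.eq_of_mem_replicate hi, Multiset.eq_of_mem_replicate hj] at hij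
    exact hij rfl
  have hrepcard : (Finset.univ.image (fun i : Fin n => Sym.replicate 3 i)).card = n := by
    rw [Finset.card_image_of_injective _ (Sym.replicate_right_injective (by norm_num))]
    simp
  have hcount : Tf.card + n ≤ Fintype.card (Sym (Fin n) 3) := by
    have hcu := Finset.card_le_univ
      (Tf ∪ Finset.univ.image (fun i : Fin n => Sym.replicate 3 i))
    rw [Finset.card_union_of_disjoint hdisj, hrepcard] at hcu
    exact hcu
  have hsym : Fintype.card (Sym (Fin n) 3) = (n + 2).choose 3 := by
    rw [Sym.card_sym_eq_choose, Fintype.card_fin]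
    norm_num
  refine ⟨hfin, ?_⟩
  -- arithmetic
  obtain ⟨m', rfl⟩ : ∃ m', n = m' + 2 := ⟨n - 2, by omega⟩
  rw [hsym] at hcount
  set d := (m' + 2 + 2).choose 3 with hd
  have h6 : 6 * d = (m' + 4) * (m' + 3) * (m' + 2) := by
    have hf3 : Nat.factorial 3 = 6 := by decide
    have h1 : d = (m' + 4).descFactorial 3 / 6 := by
      rw [hd, show m' + 2 + 2 = m' + 4 from rfl,
        Nat.choose_eq_descFactorial_div_factorial, hf3]
    have h2 : (6:ℕ) ∣ (m' + 4).descFactorial 3 :=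
      hf3 ▸ Nat.factorial_dvd_descFactorial (m' + 4) 3
    have h3 : (m' + 4).descFactorial 3 = (m' + 2) * ((m' + 3) * ((m' + 4) * 1)) := by
      simp [Nat.descFactorial_succ, Nat.descFactorial_zero]
    rw [h1, Nat.mul_div_cancel' h2, h3]
    ring
  have e0 : (m' + 2) * (m' + 6) * (m' + 1) + 6 * (m' + 2)
      = (m' + 4) * (m' + 3) * (m' + 2) := by ring
  have hP : (m' + 2) * (m' + 2 + 4) * (m' + 2 - 1) = 6 * (d - (m' + 2)) := by
    rw [show m' + 2 - 1 = m' + 1 from rfl, show m' + 2 + 4 = m' + 6 from rfl]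
    generalize hQ : (m' + 4) * (m' + 3) * (m' + 2) = Q at h6 e0
    generalize hPp : (m' + 2) * (m' + 6) * (m' + 1) = P at e0 ⊢
    omega
  rw [hP, Nat.mul_div_cancel_left _ (by norm_num : (0:ℕ) < 6)]
  omega
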